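/- cov(N) ≤ b_⋔, where cov(N) is the least cardinality of a family of null subsets of 2^ω covering 2^ω and b_⋔ is the least cardinality of a ⋔-unbounded family in 2^ω. -/

import Mathlib

open Filter Set MeasureTheory Cardinal

/-- The interval partition of ℕ with |Iₙ| = 2^(n+1): Iₙ = [2^(n+1) - 2, 2^(n+2) - 2). -/
def intervalI (n : ℕ) : Set ℕ := Set.Ico (2 ^ (n + 1) - 2) (2 ^ (n + 2) - 2)

/-- f ⋔ g iff for all but finitely many k, f↾Iₖ ≠ g↾Iₖ. -/
def Fork (f g : ℕ → Bool) : Prop := ∀ᶠ k in atTop, ∃ j ∈ intervalI k, f j ≠ g j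

/-- A measure on Cantor space is the fair-coin product measure iff it is a probability
measure giving each cylinder determined by finitely many coordinates its fair value. -/
def IsFairCoin (μ : Measure (ℕ → Bool)) : Prop :=
  IsProbabilityMeasure μ ∧
  ∀ (s : Finset ℕ) (σ : ℕ → Bool),
    μ {f : ℕ → Bool | ∀ i ∈ s, f i = σ i} = (1 / 2 : ENNReal) ^ s.card

theorem null_aux (μ : Measure (ℕ → Bool)) (hμ : IsFairCoin μ) (f : ℕ → Bool) :
    μ {g | ¬ Fork f g} = 0 := by
  set E : ℕ → Set (ℕ → Bool) := fun k => {g | ∀ j ∈ intervalI k, g j = f j} with hEdef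
  have hE : ∀ k, μ (E k) = (1 / 2 : ENNReal) ^ (2 ^ (k + 1)) := by
    intro k
    have hs : (Finset.Ico (2 ^ (k + 1) - 2) (2 ^ (k + 2) - 2)).card = 2 ^ (k + 1) := by
      rw [Nat.card_Ico]
      have h2 : (2 : ℕ) ≤ 2 ^ (k + 1) := by
        calc (2:ℕ) = 2 ^ 1 := rfl
        _ ≤ 2 ^ (k + 1) := Nat.pow_le_pow_right (by norm_num) (by omega)
      have h3 : (2 : ℕ) ^ (k + 2) = 2 * 2 ^ (k + 1) := by ring
      omega
    have h := hμ.2 (Finset.Ico (2 ^ (k + 1) - 2) (2 ^ (k + 2) - 2)) f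
    rw [hs] at h
    have hset : E k = {g : ℕ → Bool |
        ∀ i ∈ Finset.Ico (2 ^ (k + 1) - 2) (2 ^ (k + 2) - 2), g i = f i} := by
      ext g
      simp [hEdef, intervalI, Finset.mem_Ico, Set.mem_Ico]
    rw [hset, h]
  have hsum : ∑' k, μ (E k) ≠ ⊤ := by
    have hle : ∀ k, μ (E k) ≤ (1 / 2 : ENNReal) ^ k := by
      intro k
      rw [hE k]
      refine pow_le_pow_of_le_one zero_le (by norm_num) ?_
      calc k ≤ 2 ^ k := Nat.le_of_lt (Nat.lt_two_pow_self)
      _ ≤ 2 ^ (k + 1) := Nat.pow_le_pow_right (by norm_num) (Nat.le_succ k)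
    have h1 : ∑' k, μ (E k) ≤ ∑' k : ℕ, (1 / 2 : ENNReal) ^ k := ENNReal.tsum_le_tsum hle
    refine ne_top_of_le_ne_top ?_ h1
    rw [ENNReal.tsum_geometric]
    simp
  have hlim : μ (limsup E atTop) = 0 := measure_limsup_atTop_eq_zero hsum
  have hsub : {g | ¬ Fork f g} ⊆ limsup E atTop := by
    intro g hg
    rw [mem_limsup_iff_frequently_mem]
    rw [Set.mem_setOf_eq, Fork, Filter.not_eventually] at hg
    refine hg.mono fun k hk => ?_
    intro j hj
    by_contra hne
    exact hk ⟨j, hj, fun h => hne h.symm⟩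
  exact le_antisymm (le_trans (measure_mono hsub) hlim.le) zero_le

/-- cov(N) ≤ b_⋔. -/
theorem stmt7 (μ : Measure (ℕ → Bool)) (hμ : IsFairCoin μ) :
    sInf {c : Cardinal | ∃ 𝒜 : Set (Set (ℕ → Bool)), #𝒜 = c ∧
        (∀ A ∈ 𝒜, μ A = 0) ∧ ⋃₀ 𝒜 = Set.univ} ≤
      sInf {c : Cardinal | ∃ F : Set (ℕ → Bool), #F = c ∧
        ∀ g : ℕ → Bool, ∃ f ∈ F, ¬ Fork f g} := by
  apply le_csInf
  · refine ⟨#(Set.univ : Set (ℕ → Bool)), Set.univ, rfl, fun g => ⟨g, mem_univ g, ?_⟩⟩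
    intro h
    obtain ⟨j, x, _, hx⟩ := h.exists
    exact hx rfl
  · rintro c ⟨F, rfl, hF⟩
    set A : (ℕ → Bool) → Set (ℕ → Bool) := fun f => {g | ¬ Fork f g} with hA
    have hmem : #(A '' F) ∈ {c : Cardinal | ∃ 𝒜 : Set (Set (ℕ → Bool)), #𝒜 = c ∧
        (∀ B ∈ 𝒜, μ B = 0) ∧ ⋃₀ 𝒜 = Set.univ} := by
      refine ⟨A '' F, rfl, ?_, ?_⟩
      · rintro B ⟨f, hf, rfl⟩
        exact null_aux μ hμ f
      · ext g
        simp only [Set.mem_sUnion, Set.mem_univ, iff_true]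
        obtain ⟨f, hfF, hf⟩ := hF g
        exact ⟨A f, ⟨f, hfF, rfl⟩, hf⟩
    exact le_trans (csInf_le (OrderBot.bddBelow _) hmem) (Cardinal.mk_image_le)
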